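/- A set Q of subsets of X_n is an optimal set of questions — i.e., c_Q(μ) = Opt(μ) for every probability distribution μ on X_n — if and only if Q is a dyadic hitter, i.e., for every non-constant dyadic distribution μ on X_n there exists A ∈ Q with μ(A) = 1/2. -/

import Mathlib

namespace TQ

/-- A decision tree: internal nodes are labeled by questions (subsets of `α`,
with the two children corresponding to Yes/No), leaves by elements of `α`. -/
inductive DTree (α : Type) where
  | leaf (x : α) : DTree α
  | node (q : Finset α) (yes no : DTree α) : DTree α

namespace DTree

variable {α : Type} [DecidableEq α]

/-- The list of leaf labels of a decision tree. -/
def leaves : DTree α → List α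
  | .leaf x => [x]
  | .node _ t f => leaves t ++ leaves f

/-- The set of questions appearing at internal nodes. -/
def questions : DTree α → Set (Finset α)
  | .leaf _ => ∅
  | .node q t f => insert q (questions t ∪ questions f)

/-- Follow the path of `x` (Yes-edge iff `x` belongs to the question);
returns `some d` iff the path ends at a leaf labeled `x`, at depth `d`. -/
def find? : DTree α → α → Option ℕ
  | .leaf y, x => if y = x then some 0 else none
  | .node q t f, x => (if x ∈ q then find? t x else find? f x).map (· + 1)

/-- The depth of the leaf labeled `x` (junk value `0` if the path of `x`
does not end at a leaf labeled `x`). -/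
def depth (T : DTree α) (x : α) : ℕ := (T.find? x).getD 0

end DTree

variable {α : Type} [Fintype α] [DecidableEq α]

/-- `μ` is a probability distribution on `α`. -/
def IsDistribution (μ : α → ℝ) : Prop := (∀ x, 0 ≤ μ x) ∧ ∑ x, μ x = 1

/-- `T` is valid for `μ`: its leaves are distinct, the set of leaf labels is the
support of `μ`, and for every `x` in the support the path of `x` ends at the
leaf labeled `x`. -/
structure IsValid (T : DTree α) (μ : α → ℝ) : Prop where
  nodup : T.leaves.Nodup
  mem_leaves : ∀ x, x ∈ T.leaves ↔ μ x ≠ 0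
  finds : ∀ x, μ x ≠ 0 → T.find? x = some (T.depth x)

/-- The cost of `T` on `μ`: the average depth `∑ x, μ(x) · T(x)`. -/
noncomputable def cost (T : DTree α) (μ : α → ℝ) : ℝ := ∑ x, μ x * (T.depth x : ℝ)

/-- All questions of `T` belong to `Q`. -/
def UsesQuestions (T : DTree α) (Q : Set (Finset α)) : Prop := T.questions ⊆ Q

/-- `Opt(μ)`: the optimal cost over all decision trees valid for `μ`. -/
noncomputable def OptCost (μ : α → ℝ) : ℝ :=
  sInf { c | ∃ T : DTree α, IsValid T μ ∧ c = cost T μ }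

/-- `c_Q(μ)`: the optimal cost over decision trees valid for `μ`
using only questions from `Q`. -/
noncomputable def cQ (Q : Set (Finset α)) (μ : α → ℝ) : ℝ :=
  sInf { c | ∃ T : DTree α, IsValid T μ ∧ UsesQuestions T Q ∧ c = cost T μ }

/-- The base-2 (Shannon) entropy of `μ`. (Note `Real.logb 2 0 = 0`.) -/
noncomputable def entropy (μ : α → ℝ) : ℝ := ∑ x, -(μ x * Real.logb 2 (μ x))

/-- `Q` achieves prolixity `r`: for every distribution there is a valid tree using
only questions from `Q` of cost at most `Opt(μ) + r`. -/
def AchievesProlixity {n : ℕ} (Q : Finset (Finset (Fin n))) (r : ℝ) : Prop :=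
  ∀ μ : Fin n → ℝ, IsDistribution μ →
    ∃ T : DTree (Fin n), IsValid T μ ∧ UsesQuestions T ↑Q ∧ cost T μ ≤ OptCost μ + r

/-- `Q` achieves redundancy `r`: for every distribution there is a valid tree using
only questions from `Q` of cost at most `H(μ) + r`. -/
def AchievesRedundancy {n : ℕ} (Q : Finset (Finset (Fin n))) (r : ℝ) : Prop :=
  ∀ μ : Fin n → ℝ, IsDistribution μ →
    ∃ T : DTree (Fin n), IsValid T μ ∧ UsesQuestions T ↑Q ∧ cost T μ ≤ entropy μ + r

/-- `u_Opt(n,r)`: the minimum cardinality of a set of questions achieving prolixity `r`. -/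
noncomputable def uOpt (n : ℕ) (r : ℝ) : ℕ :=
  sInf { k | ∃ Q : Finset (Finset (Fin n)), Q.card = k ∧ AchievesProlixity Q r }

/-- `u_H(n,r)`: the minimum cardinality of a set of questions achieving redundancy `r`. -/
noncomputable def uH (n : ℕ) (r : ℝ) : ℕ :=
  sInf { k | ∃ Q : Finset (Finset (Fin n)), Q.card = k ∧ AchievesRedundancy Q r }

end TQ

namespace TQ

/-- `μ` is dyadic: every probability is `0` or an integer power of `1/2`. -/
def IsDyadic {α : Type} (μ : α → ℝ) : Prop :=
  ∀ x, μ x = 0 ∨ ∃ d : ℤ, μ x = (1 / 2 : ℝ) ^ d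

/-- `μ` is non-constant: its support has at least two elements. -/
def NonConstant {α : Type} (μ : α → ℝ) : Prop :=
  ∃ x y, x ≠ y ∧ μ x ≠ 0 ∧ μ y ≠ 0

end TQ



namespace TQ

noncomputable def pw (k : ℕ) : ℝ := ((2:ℝ)^k)⁻¹

lemma pw_pos (k : ℕ) : 0 < pw k := by unfold pw; positivity

lemma pw_zero : pw 0 = 1 := by simp [pw]

lemma pw_succ (k : ℕ) : pw (k+1) = pw k / 2 := by
  unfold pw; rw [pow_succ]; field_simp

lemma pw_le_one (k : ℕ) : pw k ≤ 1 := by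
  unfold pw
  rw [inv_le_one_iff₀]
  right; exact one_le_pow₀ (by norm_num)

lemma pw_anti {k l : ℕ} (h : k ≤ l) : pw l ≤ pw k := by
  unfold pw
  exact inv_anti₀ (by positivity) (pow_le_pow_right₀ (by norm_num) h)

lemma pw_lt_pw {k l : ℕ} (h : k < l) : pw l < pw k := by
  unfold pw
  exact inv_strictAnti₀ (by positivity) (pow_lt_pow_right₀ (by norm_num) h)

lemma pw_inj {k l : ℕ} (h : pw k = pw l) : k = l := by
  by_contra hne
  rcases Nat.lt_or_ge k l with hlt | hge
  · exact absurd h (ne_of_gt (pw_lt_pw hlt))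
  · exact absurd h (ne_of_lt (pw_lt_pw (lt_of_le_of_ne hge (Ne.symm hne))))

lemma pw_add (a b : ℕ) : pw (a + b) = pw a * pw b := by
  unfold pw; rw [pow_add, mul_inv]

lemma gibbs_point (d e : ℕ) : ((d:ℝ) - e) * Real.log 2 * pw d ≤ pw e - pw d := by
  have hx : (0:ℝ) < pw e / pw d := div_pos (pw_pos e) (pw_pos d)
  have hlog : Real.log (pw e / pw d) = ((d:ℝ) - e) * Real.log 2 := by
    unfold pw
    rw [Real.log_div (by positivity) (by positivity), Real.log_inv, Real.log_inv,
      Real.log_pow, Real.log_pow]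
    ring
  have h := Real.log_le_sub_one_of_pos hx
  rw [hlog] at h
  have hd := pw_pos d
  have := mul_le_mul_of_nonneg_right h (le_of_lt hd)
  calc ((d:ℝ) - e) * Real.log 2 * pw d ≤ (pw e / pw d - 1) * pw d := this
    _ = pw e - pw d := by field_simp

lemma gibbs_point_strict {d e : ℕ} (hne : d ≠ e) :
    ((d:ℝ) - e) * Real.log 2 * pw d < pw e - pw d := by
  have hx : (0:ℝ) < pw e / pw d := div_pos (pw_pos e) (pw_pos d)
  have hne1 : pw e / pw d ≠ 1 := by
    intro h
    have : pw e = pw d := (div_eq_one_iff_eq (ne_of_gt (pw_pos d))).mp h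
    exact hne (pw_inj this.symm)
  have hlog : Real.log (pw e / pw d) = ((d:ℝ) - e) * Real.log 2 := by
    unfold pw
    rw [Real.log_div (by positivity) (by positivity), Real.log_inv, Real.log_inv,
      Real.log_pow, Real.log_pow]
    ring
  have h := Real.log_lt_sub_one_of_pos hx hne1
  rw [hlog] at h
  have hd := pw_pos d
  have := mul_lt_mul_of_pos_right h hd
  calc ((d:ℝ) - e) * Real.log 2 * pw d < (pw e / pw d - 1) * pw d := this
    _ = pw e - pw d := by field_simp

end TQ
namespace TQ

open Finset

variable {n : ℕ}

lemma gibbs_le (S : Finset (Fin n)) (d e : Fin n → ℕ)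
    (hd : ∑ x ∈ S, pw (d x) = 1) (he : ∑ x ∈ S, pw (e x) ≤ 1) :
    ∑ x ∈ S, pw (d x) * d x ≤ ∑ x ∈ S, pw (d x) * e x := by
  have key : ∑ x ∈ S, ((d x : ℝ) - e x) * Real.log 2 * pw (d x)
      ≤ ∑ x ∈ S, (pw (e x) - pw (d x)) :=
    Finset.sum_le_sum fun x _ => gibbs_point (d x) (e x)
  rw [Finset.sum_sub_distrib, hd] at key
  have h2 : ∑ x ∈ S, ((d x : ℝ) - e x) * Real.log 2 * pw (d x)
      = (∑ x ∈ S, pw (d x) * d x - ∑ x ∈ S, pw (d x) * e x) * Real.log 2 := by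
    rw [sub_mul, Finset.sum_mul, Finset.sum_mul, ← Finset.sum_sub_distrib]
    apply Finset.sum_congr rfl; intro x _; ring
  rw [h2] at key
  have hlog : (0:ℝ) < Real.log 2 := Real.log_pos (by norm_num)
  nlinarith [key, he, hlog]

lemma gibbs_lt (S : Finset (Fin n)) (d e : Fin n → ℕ)
    (hd : ∑ x ∈ S, pw (d x) = 1) (he : ∑ x ∈ S, pw (e x) ≤ 1)
    {x₀ : Fin n} (hx₀ : x₀ ∈ S) (hne : d x₀ ≠ e x₀) :
    ∑ x ∈ S, pw (d x) * d x < ∑ x ∈ S, pw (d x) * e x := by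
  have key : ∑ x ∈ S, ((d x : ℝ) - e x) * Real.log 2 * pw (d x)
      < ∑ x ∈ S, (pw (e x) - pw (d x)) := by
    apply Finset.sum_lt_sum (fun x _ => gibbs_point (d x) (e x))
    exact ⟨x₀, hx₀, gibbs_point_strict hne⟩
  rw [Finset.sum_sub_distrib, hd] at key
  have h2 : ∑ x ∈ S, ((d x : ℝ) - e x) * Real.log 2 * pw (d x)
      = (∑ x ∈ S, pw (d x) * d x - ∑ x ∈ S, pw (d x) * e x) * Real.log 2 := by
    rw [sub_mul, Finset.sum_mul, Finset.sum_mul, ← Finset.sum_sub_distrib]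
    apply Finset.sum_congr rfl; intro x _; ring
  rw [h2] at key
  have hlog : (0:ℝ) < Real.log 2 := Real.log_pos (by norm_num)
  nlinarith [key, he, hlog]

/-- Subset-sum for powers of two. -/
lemma subset_sum_pow2 : ∀ (N : ℕ) (S : Finset (Fin n)) (wt : Fin n → ℕ) (t : ℕ),
    S.card ≤ N → (∀ x ∈ S, ∃ j, wt x = 2^j) → (∀ x ∈ S, wt x ∣ t) →
    t ≤ ∑ x ∈ S, wt x → ∃ A ⊆ S, ∑ x ∈ A, wt x = t := by
  intro N
  induction N with
  | zero =>
    intro S wt t hcard _ _ hle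
    have : S = ∅ := Finset.card_eq_zero.mp (Nat.le_zero.mp hcard)
    subst this
    simp at hle
    exact ⟨∅, Finset.empty_subset _, by simp [hle]⟩
  | succ N ih =>
    intro S wt t hcard hpow hdvd hle
    rcases Nat.eq_zero_or_pos t with ht | ht
    · exact ⟨∅, Finset.empty_subset _, by simp [ht]⟩
    · have hS : S.Nonempty := by
        rcases S.eq_empty_or_nonempty with h | h
        · subst h; simp at hle; omega
        · exact h
      obtain ⟨x, hxS, hmax⟩ := Finset.exists_max_image S wt hS
      have hwx : wt x ≤ t := Nat.le_of_dvd ht (hdvd x hxS)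
      have hcard' : (S.erase x).card ≤ N := by
        have := Finset.card_erase_of_mem hxS; omega
      obtain ⟨A', hA'sub, hA'sum⟩ := ih (S.erase x) wt (t - wt x) hcard'
        (fun y hy => hpow y (Finset.mem_of_mem_erase hy))
        (fun y hy => by
          have hyS := Finset.mem_of_mem_erase hy
          obtain ⟨jy, hjy⟩ := hpow y hyS
          obtain ⟨jx, hjx⟩ := hpow x hxS
          have hle' : wt y ≤ wt x := hmax y hyS
          have : jy ≤ jx := by
            rw [hjy, hjx] at hle'
            exact (Nat.pow_le_pow_iff_right (by norm_num)).mp hle'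
          have hdvd' : wt y ∣ wt x := by
            rw [hjy, hjx]; exact pow_dvd_pow 2 this
          exact Nat.dvd_sub (hdvd y hyS) hdvd')
        (by
          have := Finset.add_sum_erase S wt hxS
          omega)
      refine ⟨insert x A', ?_, ?_⟩
      · intro y hy
        rcases Finset.mem_insert.mp hy with h | h
        · subst h; exact hxS
        · exact Finset.mem_of_mem_erase (hA'sub h)
      · have hxA' : x ∉ A' := fun h => (Finset.mem_erase.mp (hA'sub h)).1 rfl
        rw [Finset.sum_insert hxA', hA'sum]
        omega

/-- Every nonconstant dyadic distribution on a finset has a subset of mass 1/2. -/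
lemma dyadic_subset_half (S : Finset (Fin n)) (k : Fin n → ℕ) (h2 : 2 ≤ S.card)
    (hsum : ∑ x ∈ S, pw (k x) = 1) : ∃ A ⊆ S, ∑ x ∈ A, pw (k x) = 1/2 := by
  have hk1 : ∀ x ∈ S, 1 ≤ k x := by
    intro x hx
    by_contra h
    have hk0 : k x = 0 := by omega
    obtain ⟨y, hyS, hyx⟩ : ∃ y ∈ S, y ≠ x := by
      obtain ⟨a, ha, b, hb, hab⟩ := Finset.one_lt_card.mp (by omega : 1 < S.card)
      rcases eq_or_ne a x with h | h
      · exact ⟨b, hb, by rw [← h]; exact hab.symm⟩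
      · exact ⟨a, ha, h⟩
    have hrest : pw (k x) + pw (k y) ≤ ∑ z ∈ S, pw (k z) := by
      have : ({x, y} : Finset (Fin n)) ⊆ S := by
        intro z hz; rcases Finset.mem_insert.mp hz with h | h
        · subst h; exact hx
        · exact (Finset.mem_singleton.mp h) ▸ hyS
      calc pw (k x) + pw (k y) = ∑ z ∈ ({x, y} : Finset (Fin n)), pw (k z) := by
            rw [Finset.sum_insert (by simp [hyx.symm]), Finset.sum_singleton]
        _ ≤ _ := Finset.sum_le_sum_of_subset_of_nonneg this
            (fun z _ _ => (pw_pos (k z)).le)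
    rw [hsum, hk0, pw_zero] at hrest
    have := pw_pos (k y)
    linarith
  set K := S.sup k with hK
  have hkK : ∀ x ∈ S, k x ≤ K := fun x hx => Finset.le_sup hx
  have hK1 : 1 ≤ K := by
    obtain ⟨x, hx⟩ := Finset.card_pos.mp (by omega : 0 < S.card)
    exact le_trans (hk1 x hx) (hkK x hx)
  -- natural number version
  have hpow_eq : ∀ x ∈ S, ((2:ℝ))^(K - k x) = 2^K * pw (k x) := by
    intro x hx
    have h : ((2:ℝ))^(K - k x) * 2^(k x) = 2^K := by
      rw [← pow_add]; congr 1; have := hkK x hx; omega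
    rw [pw, eq_comm, mul_inv_eq_iff_eq_mul₀ (by positivity)]
    linarith [h]
  have hnat : ∑ x ∈ S, 2^(K - k x) = 2^K := by
    have hreal : ((∑ x ∈ S, 2^(K - k x) : ℕ) : ℝ) = ((2^K : ℕ) : ℝ) := by
      push_cast
      rw [Finset.sum_congr rfl hpow_eq, ← Finset.mul_sum, hsum, mul_one]
    exact Nat.cast_injective hreal
  obtain ⟨A, hAS, hAsum⟩ := subset_sum_pow2 S.card S (fun x => 2^(K - k x)) (2^(K-1))
    le_rfl (fun x _ => ⟨K - k x, rfl⟩)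
    (fun x hx => pow_dvd_pow 2 (Nat.sub_le_sub_left (hk1 x hx) K))
    (by rw [hnat]; exact Nat.pow_le_pow_right (by norm_num) (by omega))
  refine ⟨A, hAS, ?_⟩
  have hterm : ∀ x ∈ A, pw (k x) = ((2:ℝ))^(K - k x) * pw K := by
    intro x hx
    have h := hpow_eq x (hAS hx)
    rw [h]
    have hKK : ((2:ℝ))^K * pw K = 1 := by rw [pw]; field_simp
    linear_combination (-pw (k x)) * hKK
  rw [Finset.sum_congr rfl hterm, ← Finset.sum_mul]
  have hAcast : (∑ x ∈ A, ((2:ℝ))^(K - k x)) = ((2:ℝ))^(K-1) := by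
    have : ((∑ x ∈ A, 2^(K - k x) : ℕ) : ℝ) = ((2^(K-1) : ℕ) : ℝ) := by
      exact_mod_cast congrArg (Nat.cast : ℕ → ℝ) hAsum
    push_cast at this
    exact this
  rw [hAcast, pw]
  have h2K : ((2:ℝ))^(K-1) * 2 = 2^K := by
    rw [← pow_succ]; congr 1; omega
  have hKpos : (0:ℝ) < 2^K := by positivity
  field_simp
  linarith

end TQ
namespace TQ

open Finset

variable {n : ℕ}

lemma find?_node {q : Finset (Fin n)} {t f : DTree (Fin n)} {x : Fin n} {e : ℕ}
    (h : (DTree.node q t f).find? x = some e) :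
    1 ≤ e ∧ ((x ∈ q → t.find? x = some (e - 1)) ∧ (x ∉ q → f.find? x = some (e - 1))) := by
  rw [DTree.find?] at h
  by_cases hq : x ∈ q
  · rw [if_pos hq] at h
    obtain ⟨m, hm, hme⟩ := Option.map_eq_some_iff.mp h
    refine ⟨by omega, fun _ => ?_, fun hc => absurd hq hc⟩
    rw [hm]; congr 1; omega
  · rw [if_neg hq] at h
    obtain ⟨m, hm, hme⟩ := Option.map_eq_some_iff.mp h
    refine ⟨by omega, fun hc => absurd hc hq, fun _ => ?_⟩
    rw [hm]; congr 1; omega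

/-- Kraft inequality: any collection of elements found by a tree has Kraft sum ≤ 1. -/
lemma kraft : ∀ (T : DTree (Fin n)) (S : Finset (Fin n)) (e : Fin n → ℕ),
    (∀ x ∈ S, T.find? x = some (e x)) → ∑ x ∈ S, pw (e x) ≤ 1 := by
  intro T
  induction T with
  | leaf y =>
    intro S e h
    have hsub : S ⊆ {y} := by
      intro x hx
      have := h x hx
      rw [DTree.find?] at this
      by_cases hxy : y = x
      · simp [hxy]
      · rw [if_neg hxy] at this; exact absurd this (by simp)
    rcases Finset.subset_singleton_iff.mp hsub with h0 | h0
    · rw [h0]; simp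
    · rw [h0, Finset.sum_singleton]; exact pw_le_one _
  | node q t f iht ihf =>
    intro S e h
    have h1 : ∀ x ∈ S ∩ q, t.find? x = some (e x - 1) := by
      intro x hx
      obtain ⟨hxS, hxq⟩ := Finset.mem_inter.mp hx
      exact ((find?_node (h x hxS)).2.1) hxq
    have h2 : ∀ x ∈ S \ q, f.find? x = some (e x - 1) := by
      intro x hx
      obtain ⟨hxS, hxq⟩ := Finset.mem_sdiff.mp hx
      exact ((find?_node (h x hxS)).2.2) hxq
    have he1 : ∀ x ∈ S, 1 ≤ e x := fun x hx => (find?_node (h x hx)).1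
    have k1 := iht (S ∩ q) (fun x => e x - 1) h1
    have k2 := ihf (S \ q) (fun x => e x - 1) h2
    have e1 : ∑ x ∈ S ∩ q, pw (e x) ≤ 1/2 := by
      have : ∑ x ∈ S ∩ q, pw (e x) = (∑ x ∈ S ∩ q, pw (e x - 1)) / 2 := by
        rw [Finset.sum_div]
        apply Finset.sum_congr rfl
        intro x hx
        have h1x := he1 x (Finset.mem_inter.mp hx).1
        rw [← pw_succ]; congr 1; omega
      rw [this]; linarith
    have e2 : ∑ x ∈ S \ q, pw (e x) ≤ 1/2 := by
      have : ∑ x ∈ S \ q, pw (e x) = (∑ x ∈ S \ q, pw (e x - 1)) / 2 := by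
        rw [Finset.sum_div]
        apply Finset.sum_congr rfl
        intro x hx
        have h1x := he1 x (Finset.mem_sdiff.mp hx).1
        rw [← pw_succ]; congr 1; omega
      rw [this]; linarith
    have := Finset.sum_inter_add_sum_sdiff S q (fun x => pw (e x))
    linarith

/-- unreachable elements are not found -/
lemma find?_eq_none_of_not_mem_leaves : ∀ (T : DTree (Fin n)) (x : Fin n),
    x ∉ T.leaves → T.find? x = none := by
  intro T
  induction T with
  | leaf y =>
    intro x hx
    rw [DTree.leaves] at hx
    simp at hx
    rw [DTree.find?, if_neg (by intro h; exact hx h.symm)]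
  | node q t f iht ihf =>
    intro x hx
    rw [DTree.leaves] at hx
    simp at hx
    rw [DTree.find?]
    by_cases hq : x ∈ q
    · rw [if_pos hq, iht x hx.1]; rfl
    · rw [if_neg hq, ihf x hx.2]; rfl

end TQ
namespace TQ

open Finset

variable {n : ℕ}

/-- The recursive construction: given a "splitter" for scaled dyadic weights,
build a tree over support `S` with questions in `QQ` and depths at most `k x - m`. -/
lemma build (QQ : Set (Finset (Fin n)))
    (hsplit : ∀ (S : Finset (Fin n)) (k : Fin n → ℕ), 2 ≤ S.card →
      ∑ x ∈ S, pw (k x) = 1 → ∃ A ∈ QQ, ∑ x ∈ S ∩ A, pw (k x) = 1/2) :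
    ∀ (N : ℕ) (S : Finset (Fin n)) (k : Fin n → ℕ) (m : ℕ), S.card ≤ N → S.Nonempty →
    (∑ x ∈ S, pw (k x) = pw m) →
    ∃ T : DTree (Fin n), T.leaves.toFinset = S ∧ T.leaves.Nodup ∧
      T.questions ⊆ QQ ∧ ∀ x ∈ S, ∃ e, T.find? x = some e ∧ e + m ≤ k x := by
  intro N
  induction N with
  | zero =>
    intro S k m hcard hne _
    exact absurd (Finset.card_pos.mpr hne) (by omega)
  | succ N ih =>
    intro S k m hcard hne hsum
    rcases eq_or_lt_of_le (Nat.succ_le_of_lt (Finset.card_pos.mpr hne)) with h1 | h2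
    · -- singleton case
      obtain ⟨x, hx⟩ := Finset.card_eq_one.mp h1.symm
      subst hx
      rw [Finset.sum_singleton] at hsum
      have hkm : k x = m := pw_inj hsum
      refine ⟨DTree.leaf x, by simp [DTree.leaves], by simp [DTree.leaves],
        by simp [DTree.questions], ?_⟩
      intro y hy
      rw [Finset.mem_singleton] at hy
      subst hy
      exact ⟨0, by rw [DTree.find?, if_pos rfl], by omega⟩
    · -- splitting case
      have h2' : 2 ≤ S.card := h2
      -- each element has k x > m
      have hgt : ∀ x ∈ S, m + 1 ≤ k x := by
        intro x hx
        by_contra hc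
        have hle : pw m ≤ pw (k x) := pw_anti (by omega)
        obtain ⟨y, hyS, hyx⟩ : ∃ y ∈ S, y ≠ x := by
          obtain ⟨a, ha, b, hb, hab⟩ := Finset.one_lt_card.mp h2
          rcases eq_or_ne a x with h | h
          · exact ⟨b, hb, by rw [← h]; exact hab.symm⟩
          · exact ⟨a, ha, h⟩
        have : pw (k x) + pw (k y) ≤ ∑ z ∈ S, pw (k z) := by
          calc pw (k x) + pw (k y) = ∑ z ∈ ({x, y} : Finset (Fin n)), pw (k z) := by
                rw [Finset.sum_insert (by simp [hyx.symm]), Finset.sum_singleton]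
            _ ≤ _ := Finset.sum_le_sum_of_subset_of_nonneg
                (by intro z hz; rcases Finset.mem_insert.mp hz with h | h
                    · subst h; exact hx
                    · exact (Finset.mem_singleton.mp h) ▸ hyS)
                (fun z _ _ => (pw_pos (k z)).le)
        rw [hsum] at this
        have := pw_pos (k y)
        linarith
      -- scaled weights
      set k' : Fin n → ℕ := fun x => k x - m with hk'
      have hterm : ∀ x ∈ S, pw (k x) = pw (k' x) * pw m := by
        intro x hx
        rw [← pw_add]; congr 1
        have := hgt x hx; simp only [hk']; omega
      have hsum' : ∑ x ∈ S, pw (k' x) = 1 := by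
        have h' : (∑ x ∈ S, pw (k' x)) * pw m = 1 * pw m := by
          rw [Finset.sum_mul, one_mul, ← Finset.sum_congr rfl hterm]
          exact hsum
        exact mul_right_cancel₀ (ne_of_gt (pw_pos m)) h'
      obtain ⟨A, hAQ, hAsum⟩ := hsplit S k' h2' hsum'
      -- the two halves
      have hS1 : ∑ x ∈ S ∩ A, pw (k x) = pw (m + 1) := by
        rw [pw_add]
        have : ∑ x ∈ S ∩ A, pw (k x) = (∑ x ∈ S ∩ A, pw (k' x)) * pw m := by
          rw [Finset.sum_mul]
          exact Finset.sum_congr rfl fun x hx => hterm x (Finset.mem_inter.mp hx).1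
        rw [this, hAsum]
        rw [pw_succ, pw_zero]; ring
      have hS2 : ∑ x ∈ S \ A, pw (k x) = pw (m + 1) := by
        have hsplitsum := Finset.sum_inter_add_sum_sdiff S A (fun x => pw (k x))
        have : pw m = pw (m+1) + pw (m+1) := by rw [pw_succ]; ring
        rw [hS1] at hsplitsum
        linarith [hsplitsum]
      have hne1 : (S ∩ A).Nonempty := by
        rw [← Finset.card_pos]
        by_contra hc
        have : S ∩ A = ∅ := Finset.card_eq_zero.mp (by omega)
        rw [this, Finset.sum_empty] at hS1
        exact absurd hS1.symm (ne_of_gt (pw_pos _))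
      have hne2 : (S \ A).Nonempty := by
        rw [← Finset.card_pos]
        by_contra hc
        have : S \ A = ∅ := Finset.card_eq_zero.mp (by omega)
        rw [this, Finset.sum_empty] at hS2
        exact absurd hS2.symm (ne_of_gt (pw_pos _))
      have hcard1 : (S ∩ A).card ≤ N := by
        have hsub : S ∩ A ⊆ S := Finset.inter_subset_left
        have hlt : (S ∩ A).card < S.card := by
          apply Finset.card_lt_card
          rw [Finset.ssubset_iff_of_subset hsub]
          obtain ⟨y, hy⟩ := hne2
          exact ⟨y, (Finset.mem_sdiff.mp hy).1,
            fun hc => (Finset.mem_sdiff.mp hy).2 (Finset.mem_inter.mp hc).2⟩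
        omega
      have hcard2 : (S \ A).card ≤ N := by
        have hsub : S \ A ⊆ S := Finset.sdiff_subset
        have hlt : (S \ A).card < S.card := by
          apply Finset.card_lt_card
          rw [Finset.ssubset_iff_of_subset hsub]
          obtain ⟨y, hy⟩ := hne1
          exact ⟨y, (Finset.mem_inter.mp hy).1,
            fun hc => (Finset.mem_sdiff.mp hc).2 (Finset.mem_inter.mp hy).2⟩
        omega
      obtain ⟨T1, hL1, hN1, hQ1, hF1⟩ := ih (S ∩ A) k (m+1) hcard1 hne1 hS1
      obtain ⟨T2, hL2, hN2, hQ2, hF2⟩ := ih (S \ A) k (m+1) hcard2 hne2 hS2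
      refine ⟨DTree.node A T1 T2, ?_, ?_, ?_, ?_⟩
      · rw [DTree.leaves, List.toFinset_append, hL1, hL2]
        ext a
        simp only [Finset.mem_union, Finset.mem_inter, Finset.mem_sdiff]
        tauto
      · rw [DTree.leaves]
        apply List.Nodup.append hN1 hN2
        intro a ha1 ha2
        have h1 : a ∈ S ∩ A := hL1 ▸ List.mem_toFinset.mpr ha1
        have h2 : a ∈ S \ A := hL2 ▸ List.mem_toFinset.mpr ha2
        exact (Finset.mem_sdiff.mp h2).2 (Finset.mem_inter.mp h1).2
      · rw [DTree.questions]
        apply Set.insert_subset hAQ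
        exact Set.union_subset hQ1 hQ2
      · intro x hx
        by_cases hxA : x ∈ A
        · obtain ⟨e, he, hem⟩ := hF1 x (Finset.mem_inter.mpr ⟨hx, hxA⟩)
          exact ⟨e + 1, by rw [DTree.find?, if_pos hxA, he]; rfl, by omega⟩
        · obtain ⟨e, he, hem⟩ := hF2 x (Finset.mem_sdiff.mpr ⟨hx, hxA⟩)
          exact ⟨e + 1, by rw [DTree.find?, if_neg hxA, he]; rfl, by omega⟩

end TQ
namespace TQ

open Finset

variable {n : ℕ}

/-- Kraft saturation: depths can be decreased to make the Kraft sum exactly 1. -/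
lemma saturate : ∀ (N : ℕ) (S : Finset (Fin n)) (e : Fin n → ℕ), S.Nonempty →
    (∑ x ∈ S, e x ≤ N) → (∑ x ∈ S, pw (e x) ≤ 1) →
    ∃ d : Fin n → ℕ, (∀ x ∈ S, d x ≤ e x) ∧ ∑ x ∈ S, pw (d x) = 1 := by
  intro N
  induction N with
  | zero =>
    intro S e hne hsum hpw
    have hall : ∀ x ∈ S, e x = 0 := by
      intro x hx
      have := Finset.single_le_sum (f := e) (fun y _ => Nat.zero_le _) hx
      omega
    have : ∑ x ∈ S, pw (e x) = S.card := by
      rw [Finset.sum_congr rfl (fun x hx => by rw [hall x hx, pw_zero])]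
      simp
    refine ⟨e, fun x _ => le_rfl, ?_⟩
    rw [this] at hpw ⊢
    have h1 : 1 ≤ S.card := Finset.card_pos.mpr hne
    have : (1:ℝ) ≤ S.card := by exact_mod_cast h1
    linarith
  | succ N ih =>
    intro S e hne hsum hpw
    rcases eq_or_lt_of_le hpw with heq | hlt
    · exact ⟨e, fun x _ => le_rfl, heq⟩
    obtain ⟨x0, hx0, hmax⟩ := Finset.exists_max_image S e hne
    have hex0 : 1 ≤ e x0 := by
      by_contra hc
      have h0 : e x0 = 0 := by omega
      have hall : ∀ x ∈ S, e x = 0 := fun x hx => by have := hmax x hx; omega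
      have : ∑ x ∈ S, pw (e x) = S.card := by
        rw [Finset.sum_congr rfl (fun x hx => by rw [hall x hx, pw_zero])]
        simp
      rw [this] at hlt
      have h1 : 1 ≤ S.card := Finset.card_pos.mpr hne
      have : (1:ℝ) ≤ S.card := by exact_mod_cast h1
      linarith
    -- the sum is M * pw (e x0) with M : ℕ
    set M : ℕ := ∑ x ∈ S, 2^(e x0 - e x) with hM
    have hMsum : ∑ x ∈ S, pw (e x) = M * pw (e x0) := by
      rw [hM]
      push_cast
      rw [Finset.sum_mul]
      apply Finset.sum_congr rfl
      intro x hx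
      have hle := hmax x hx
      have hpow : ((2:ℝ))^(e x0 - e x) * 2^(e x) = 2^(e x0) := by
        rw [← pow_add]; congr 1; omega
      rw [pw, pw]
      field_simp
      linear_combination -hpow
    have hMlt : M < 2^(e x0) := by
      by_contra hc
      have h1 : (2:ℝ)^(e x0) ≤ (M:ℝ) := by exact_mod_cast not_lt.mp hc
      have h2 : ((2:ℝ))^(e x0) * pw (e x0) = 1 := by rw [pw]; field_simp
      have h3 := pw_pos (e x0)
      nlinarith [hMsum, hlt]
    set e' : Fin n → ℕ := Function.update e x0 (e x0 - 1) with he'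
    have hupd : ∀ x ∈ S.erase x0, e' x = e x := fun x hx => by
      rw [he', Function.update_of_ne (Finset.ne_of_mem_erase hx)]
    have he'x0 : e' x0 = e x0 - 1 := by rw [he', Function.update_self]
    have hsum'e : ∑ x ∈ S, e' x ≤ N := by
      have h0 : ∑ x ∈ S, e' x = (e x0 - 1) + ∑ x ∈ S.erase x0, e x := by
        rw [← Finset.add_sum_erase S e' hx0, he'x0]
        congr 1
        exact Finset.sum_congr rfl hupd
      have h2 := Finset.add_sum_erase S e hx0
      omega
    have hpw' : ∑ x ∈ S, pw (e' x) ≤ 1 := by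
      have h1 : ∑ x ∈ S, pw (e' x) = pw (e x0 - 1) + ∑ x ∈ S.erase x0, pw (e x) := by
        rw [← Finset.add_sum_erase S (fun x => pw (e' x)) hx0, he'x0]
        congr 1
        exact Finset.sum_congr rfl fun x hx => by rw [hupd x hx]
      have h2 : ∑ x ∈ S, pw (e x) = pw (e x0) + ∑ x ∈ S.erase x0, pw (e x) :=
        (Finset.add_sum_erase S (fun x => pw (e x)) hx0).symm
      have h3 : pw (e x0 - 1) = 2 * pw (e x0) := by
        obtain ⟨m, hm⟩ : ∃ m, e x0 = m + 1 := ⟨e x0 - 1, by omega⟩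
        rw [hm, Nat.add_sub_cancel, pw_succ]; ring
      have h4 : ∑ x ∈ S, pw (e' x) = (M + 1) * pw (e x0) := by
        rw [h1, h3]
        have : ∑ x ∈ S.erase x0, pw (e x) = M * pw (e x0) - pw (e x0) := by
          rw [← hMsum]; linarith [h2]
        rw [this]; push_cast; ring
      rw [h4]
      have h5 : (M:ℝ) + 1 ≤ 2^(e x0) := by exact_mod_cast hMlt
      have h6 : ((2:ℝ))^(e x0) * pw (e x0) = 1 := by rw [pw]; field_simp
      nlinarith [pw_pos (e x0)]
    obtain ⟨d, hd1, hd2⟩ := ih S e' hne hsum'e hpw'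
    refine ⟨d, ?_, hd2⟩
    intro x hx
    have := hd1 x hx
    rcases eq_or_ne x x0 with h | h
    · subst h; rw [he'x0] at this; omega
    · rw [he', Function.update_of_ne h] at this; exact this

/-- A "caterpillar" tree on any nonempty duplicate-free list. -/
lemma chain : ∀ (l : List (Fin n)), l ≠ [] → l.Nodup →
    ∃ T : DTree (Fin n), T.leaves = l ∧ ∀ x ∈ l, ∃ e, T.find? x = some e := by
  intro l
  induction l with
  | nil => intro h; exact absurd rfl h
  | cons x xs ih =>
    intro _ hnd
    rcases List.eq_nil_or_concat' xs with h | _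
    case inl =>
      subst h
      exact ⟨DTree.leaf x, rfl, by
        intro y hy
        simp at hy
        subst hy
        exact ⟨0, by rw [DTree.find?, if_pos rfl]⟩⟩
    case inr =>
      by_cases hxs : xs = []
      · subst hxs
        exact ⟨DTree.leaf x, rfl, by
          intro y hy
          simp at hy
          subst hy
          exact ⟨0, by rw [DTree.find?, if_pos rfl]⟩⟩
      · obtain ⟨T', hT'l, hT'f⟩ := ih hxs (List.Nodup.of_cons hnd)
        refine ⟨DTree.node {x} (DTree.leaf x) T', ?_, ?_⟩
        · rw [DTree.leaves, DTree.leaves, hT'l]; rfl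
        · intro y hy
          rcases List.mem_cons.mp hy with h | h
          · subst h
            exact ⟨1, by rw [DTree.find?, if_pos (Finset.mem_singleton_self y),
              DTree.find?, if_pos rfl]; rfl⟩
          · have hyx : y ≠ x := fun hc => (List.nodup_cons.mp hnd).1 (hc ▸ h)
            obtain ⟨e, he⟩ := hT'f y h
            exact ⟨e + 1, by
              rw [DTree.find?, if_neg (by simp [hyx]), he]; rfl⟩

end TQ
namespace TQ

open Finset

variable {n : ℕ}

lemma pw_shift {a K : ℕ} (h : a ≤ K) : pw a = ((2:ℝ))^(K - a) * pw K := by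
  have hpow : ((2:ℝ))^(K - a) * 2^a = 2^K := by rw [← pow_add]; congr 1; omega
  rw [pw, pw]
  field_simp
  linear_combination -hpow

lemma pw_eq_half_zpow (k : ℕ) : pw k = (1/2 : ℝ)^(k:ℤ) := by
  rw [zpow_natCast, one_div, inv_pow, pw]

lemma lt_sum_of_two {S : Finset (Fin n)} {g : Fin n → ℝ} (hpos : ∀ x ∈ S, 0 < g x)
    (h2 : 2 ≤ S.card) {x : Fin n} (hx : x ∈ S) : g x < ∑ z ∈ S, g z := by
  obtain ⟨y, hyS, hyx⟩ : ∃ y ∈ S, y ≠ x := by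
    obtain ⟨a, ha, b, hb, hab⟩ := Finset.one_lt_card.mp (by omega : 1 < S.card)
    rcases eq_or_ne a x with h | h
    · exact ⟨b, hb, by rw [← h]; exact hab.symm⟩
    · exact ⟨a, ha, h⟩
  have hsub : ({x, y} : Finset (Fin n)) ⊆ S := by
    intro z hz; rcases Finset.mem_insert.mp hz with h | h
    · subst h; exact hx
    · exact (Finset.mem_singleton.mp h) ▸ hyS
  have : g x + g y ≤ ∑ z ∈ S, g z := by
    calc g x + g y = ∑ z ∈ ({x, y} : Finset (Fin n)), g z := by
          rw [Finset.sum_insert (by simp [hyx.symm]), Finset.sum_singleton]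
      _ ≤ _ := Finset.sum_le_sum_of_subset_of_nonneg hsub
          (fun z hzS _ => (hpos z hzS).le)
  have := hpos y hyS
  linarith

lemma cost_eq_sum_filter (T : DTree (Fin n)) (μ : Fin n → ℝ) :
    cost T μ = ∑ x ∈ Finset.univ.filter (fun x => μ x ≠ 0), μ x * (T.depth x : ℝ) := by
  rw [cost, eq_comm]
  apply Finset.sum_subset (Finset.filter_subset _ _)
  intro x _ hx
  simp only [Finset.mem_filter, Finset.mem_univ, true_and, not_not] at hx
  rw [hx, zero_mul]

lemma cost_nonneg {T : DTree (Fin n)} {μ : Fin n → ℝ} (hμ : ∀ x, 0 ≤ μ x) :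
    0 ≤ cost T μ :=
  Finset.sum_nonneg fun x _ => mul_nonneg (hμ x) (Nat.cast_nonneg _)

lemma isValid_of (μ : Fin n → ℝ) (T : DTree (Fin n))
    (hL : T.leaves.toFinset = Finset.univ.filter (fun x => μ x ≠ 0))
    (hN : T.leaves.Nodup)
    (hF : ∀ x ∈ Finset.univ.filter (fun x => μ x ≠ 0), ∃ e, T.find? x = some e) :
    IsValid T μ := by
  refine ⟨hN, ?_, ?_⟩
  · intro x
    rw [← List.mem_toFinset, hL]
    simp
  · intro x hx
    obtain ⟨e, he⟩ := hF x (by simp [hx])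
    rw [he, DTree.depth, he]
    rfl

lemma depth_eq_of_find? {T : DTree (Fin n)} {x : Fin n} {e : ℕ}
    (he : T.find? x = some e) : T.depth x = e := by
  rw [DTree.depth, he]; rfl

end TQ
open TQ in
/-- A set `Q` of questions is optimal (`c_Q(μ) = Opt(μ)` for every distribution) iff
it is a dyadic hitter: every non-constant dyadic distribution has a set `A ∈ Q`
with `μ(A) = 1/2`. -/
theorem optimal_iff_dyadic_hitter (n : ℕ) (Q : Finset (Finset (Fin n))) :
    (∀ μ : Fin n → ℝ, IsDistribution μ → cQ (↑Q) μ = OptCost μ) ↔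
    (∀ μ : Fin n → ℝ, IsDistribution μ → IsDyadic μ → NonConstant μ →
      ∃ A ∈ Q, ∑ x ∈ A, μ x = 1 / 2) := by
  constructor
  · -- optimal → dyadic hitter
    intro hopt μ hdist hdy hnc
    obtain ⟨x₀, y₀, hxy, hx₀, hy₀⟩ := hnc
    classical
    set supp := Finset.univ.filter (fun x => μ x ≠ 0) with hsupp
    have hx₀s : x₀ ∈ supp := by simp [hsupp, hx₀]
    have hy₀s : y₀ ∈ supp := by simp [hsupp, hy₀]
    have hsupp2 : 2 ≤ supp.card := Finset.one_lt_card.mpr ⟨x₀, hx₀s, y₀, hy₀s, hxy⟩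
    have hsuppsum : ∑ x ∈ supp, μ x = 1 := by
      rw [hsupp, Finset.sum_filter_ne_zero]
      exact hdist.2
    have hdn : ∀ x ∈ supp, ∃ j : ℕ, μ x = pw j := by
      intro x hx
      have hxne : μ x ≠ 0 := by
        rw [hsupp] at hx
        exact (Finset.mem_filter.mp hx).2
      rcases hdy x with h | ⟨z, hz⟩
      · exact absurd h hxne
      have hle1 : μ x ≤ 1 := by
        have := Finset.single_le_sum (f := μ) (fun y _ => hdist.1 y) (Finset.mem_univ x)
        rw [hdist.2] at this
        exact this
      have hz0 : 0 ≤ z := by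
        by_contra hzneg
        push_neg at hzneg
        have : (1:ℝ) < (1/2:ℝ)^z :=
          one_lt_zpow_of_neg₀ (by norm_num) (by norm_num) hzneg
        rw [← hz] at this
        linarith
      refine ⟨z.toNat, ?_⟩
      rw [hz, pw_eq_half_zpow, Int.toNat_of_nonneg hz0]
    choose! d hd using hdn
    have hpwsum : ∑ x ∈ supp, pw (d x) = 1 := by
      rw [← Finset.sum_congr rfl hd]
      exact hsuppsum
    have hd1 : ∀ x ∈ supp, 1 ≤ d x := by
      intro x hx
      by_contra hc
      have hd0 : d x = 0 := by omega
      have hlt := lt_sum_of_two (g := fun z => pw (d z)) (fun z _ => pw_pos (d z)) hsupp2 hx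
      simp only [hpwsum] at hlt
      rw [hd0, pw_zero] at hlt
      exact lt_irrefl 1 hlt
    set H : ℝ := ∑ x ∈ supp, pw (d x) * (d x : ℝ) with hH
    have hlb : ∀ T : DTree (Fin n), IsValid T μ → H ≤ cost T μ := by
      intro T hTv
      have hfind : ∀ x ∈ supp, T.find? x = some (T.depth x) := fun x hx =>
        hTv.finds x (by simpa [hsupp] using hx)
      have hkraft := kraft T supp (fun x => T.depth x) hfind
      have hg := gibbs_le supp d (fun x => T.depth x) hpwsum hkraft
      rw [cost_eq_sum_filter, ← hsupp]
      calc H ≤ ∑ x ∈ supp, pw (d x) * ((T.depth x : ℕ) : ℝ) := hg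
        _ = ∑ x ∈ supp, μ x * ((T.depth x : ℕ) : ℝ) :=
            Finset.sum_congr rfl fun x hx => by rw [hd x hx]
    have hsplitU : ∀ (S : Finset (Fin n)) (k : Fin n → ℕ), 2 ≤ S.card →
        ∑ x ∈ S, pw (k x) = 1 →
        ∃ A ∈ (Set.univ : Set (Finset (Fin n))), ∑ x ∈ S ∩ A, pw (k x) = 1/2 := by
      intro S k h2 hsum
      obtain ⟨A, hAS, hAsum⟩ := dyadic_subset_half S k h2 hsum
      exact ⟨A, Set.mem_univ A, by rw [Finset.inter_eq_right.mpr hAS]; exact hAsum⟩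
    obtain ⟨T₀, hL₀, hN₀, hQ₀, hF₀⟩ := build Set.univ hsplitU supp.card supp d 0 le_rfl
      ⟨x₀, hx₀s⟩ (by rw [pw_zero]; exact hpwsum)
    have hT₀v : IsValid T₀ μ := isValid_of μ T₀ (hsupp ▸ hL₀) hN₀
      (fun x hx => (hF₀ x (hsupp ▸ hx)).imp fun e he => he.1)
    have hcost₀le : cost T₀ μ ≤ H := by
      rw [cost_eq_sum_filter, ← hsupp, hH]
      apply Finset.sum_le_sum
      intro x hx
      obtain ⟨e, he, hem⟩ := hF₀ x hx
      rw [depth_eq_of_find? he, hd x hx]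
      have hce : (e:ℝ) ≤ (d x : ℝ) := by exact_mod_cast (by omega : e ≤ d x)
      exact mul_le_mul_of_nonneg_left hce (pw_pos _).le
    have hcost₀ : cost T₀ μ = H := le_antisymm hcost₀le (hlb T₀ hT₀v)
    have hObdd : BddBelow {c | ∃ T : DTree (Fin n), IsValid T μ ∧ c = cost T μ} :=
      ⟨0, by rintro c ⟨T, hv, rfl⟩; exact cost_nonneg hdist.1⟩
    have hOpt : OptCost μ = H := by
      rw [OptCost]
      apply le_antisymm
      · exact csInf_le hObdd ⟨T₀, hT₀v, hcost₀.symm⟩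
      · refine le_csInf ⟨cost T₀ μ, ⟨T₀, hT₀v, rfl⟩⟩ ?_
        rintro c ⟨T, hv, rfl⟩
        exact hlb T hv
    have hcq : cQ (↑Q) μ = H := (hopt μ hdist).trans hOpt
    have hcq' : sInf {c | ∃ T : DTree (Fin n), IsValid T μ ∧ UsesQuestions T ↑Q ∧
        c = cost T μ} = H := hcq
    have hH1 : (1:ℝ) ≤ H := by
      rw [hH, ← hsuppsum]
      apply Finset.sum_le_sum
      intro x hx
      rw [hd x hx]
      have h1 : (1:ℝ) ≤ (d x : ℝ) := by exact_mod_cast hd1 x hx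
      nlinarith [pw_pos (d x)]
    have hQSne : Set.Nonempty {c | ∃ T : DTree (Fin n), IsValid T μ ∧
        UsesQuestions T ↑Q ∧ c = cost T μ} := by
      by_contra hc
      rw [Set.not_nonempty_iff_eq_empty] at hc
      rw [hc, Real.sInf_empty] at hcq'
      linarith
    set D := supp.sup d with hD
    have hquant : ∀ T : DTree (Fin n), ∃ a : ℕ,
        ∑ x ∈ supp, pw (d x) * (T.depth x : ℝ) = (a:ℝ) * pw D := by
      intro T
      refine ⟨∑ x ∈ supp, 2^(D - d x) * T.depth x, ?_⟩
      push_cast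
      rw [Finset.sum_mul]
      apply Finset.sum_congr rfl
      intro x hx
      rw [pw_shift (Finset.le_sup hx : d x ≤ D)]
      ring
    have hbH : ∃ b : ℕ, H = (b:ℝ) * pw D := by
      refine ⟨∑ x ∈ supp, 2^(D - d x) * d x, ?_⟩
      rw [hH]
      push_cast
      rw [Finset.sum_mul]
      apply Finset.sum_congr rfl
      intro x hx
      rw [pw_shift (Finset.le_sup hx : d x ≤ D)]
      ring
    obtain ⟨b, hbH⟩ := hbH
    have hlt : sInf {c | ∃ T : DTree (Fin n), IsValid T μ ∧ UsesQuestions T ↑Q ∧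
        c = cost T μ} < H + pw D := by
      rw [hcq']
      linarith [pw_pos D]
    obtain ⟨c, hcmem, hclt⟩ := exists_lt_of_csInf_lt hQSne hlt
    obtain ⟨T, hTv, hTq, rfl⟩ := hcmem
    have hfind : ∀ x ∈ supp, T.find? x = some (T.depth x) := fun x hx =>
      hTv.finds x (by simpa [hsupp] using hx)
    have hcost_sum : cost T μ = ∑ x ∈ supp, pw (d x) * (T.depth x : ℝ) := by
      rw [cost_eq_sum_filter, ← hsupp]
      exact Finset.sum_congr rfl fun x hx => by rw [hd x hx]
    obtain ⟨a, ha⟩ := hquant T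
    have hHle : H ≤ cost T μ := hlb T hTv
    have hab : a = b := by
      have hp := pw_pos D
      have h1 : (b:ℝ) * pw D ≤ (a:ℝ) * pw D := by
        rw [← ha, ← hbH, ← hcost_sum]
        exact hHle
      have h2 : (a:ℝ) * pw D < ((b:ℝ) + 1) * pw D := by
        rw [← ha, ← hcost_sum]
        calc cost T μ < H + pw D := hclt
          _ = ((b:ℝ)+1) * pw D := by rw [hbH]; ring
      have hba : b ≤ a := by
        have := le_of_mul_le_mul_right h1 hp
        exact_mod_cast this
      have hab' : a < b + 1 := by
        have := lt_of_mul_lt_mul_of_nonneg_right h2 hp.le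
        exact_mod_cast this
      omega
    have hcostH : cost T μ = H := by rw [hcost_sum, ha, hab, ← hbH]
    have hkraft := kraft T supp (fun x => T.depth x) hfind
    have hdeq : ∀ x ∈ supp, T.depth x = d x := by
      by_contra hcon
      push_neg at hcon
      obtain ⟨x₁, hx₁, hne₁⟩ := hcon
      have hglt := gibbs_lt supp d (fun x => T.depth x) hpwsum hkraft hx₁ (Ne.symm hne₁)
      rw [← hcost_sum, hcostH, hH] at hglt
      exact lt_irrefl _ hglt
    cases T with
    | leaf z =>
      have h1 : x₀ ∈ (DTree.leaf z).leaves := (hTv.mem_leaves x₀).mpr hx₀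
      have h2 : y₀ ∈ (DTree.leaf z).leaves := (hTv.mem_leaves y₀).mpr hy₀
      rw [DTree.leaves] at h1 h2
      simp at h1 h2
      exact absurd (h1.trans h2.symm) hxy
    | node A T1 T2 =>
      refine ⟨A, ?_, ?_⟩
      · have hmem : A ∈ (DTree.node A T1 T2).questions := by
          rw [DTree.questions]
          exact Set.mem_insert _ _
        exact hTq hmem
      · have hf1 : ∀ x ∈ supp ∩ A, T1.find? x = some (d x - 1) := by
          intro x hx
          obtain ⟨hxs, hxA⟩ := Finset.mem_inter.mp hx
          have h := hfind x hxs
          rw [hdeq x hxs] at h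
          exact (find?_node h).2.1 hxA
        have hf2 : ∀ x ∈ supp \ A, T2.find? x = some (d x - 1) := by
          intro x hx
          obtain ⟨hxs, hxA⟩ := Finset.mem_sdiff.mp hx
          have h := hfind x hxs
          rw [hdeq x hxs] at h
          exact (find?_node h).2.2 hxA
        have hk1 := kraft T1 (supp ∩ A) (fun x => d x - 1) hf1
        have hk2 := kraft T2 (supp \ A) (fun x => d x - 1) hf2
        have hhalf1 : ∑ x ∈ supp ∩ A, pw (d x) ≤ 1/2 := by
          have heq : ∑ x ∈ supp ∩ A, pw (d x) = (∑ x ∈ supp ∩ A, pw (d x - 1)) / 2 := by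
            rw [Finset.sum_div]
            apply Finset.sum_congr rfl
            intro x hx
            have h1x := hd1 x (Finset.mem_inter.mp hx).1
            rw [← pw_succ]
            congr 1
            omega
          rw [heq]
          linarith
        have hhalf2 : ∑ x ∈ supp \ A, pw (d x) ≤ 1/2 := by
          have heq : ∑ x ∈ supp \ A, pw (d x) = (∑ x ∈ supp \ A, pw (d x - 1)) / 2 := by
            rw [Finset.sum_div]
            apply Finset.sum_congr rfl
            intro x hx
            have h1x := hd1 x (Finset.mem_sdiff.mp hx).1
            rw [← pw_succ]
            congr 1
            omega
          rw [heq]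
          linarith
        have htot := Finset.sum_inter_add_sum_sdiff supp A (fun x => pw (d x))
        rw [hpwsum] at htot
        have heqhalf : ∑ x ∈ supp ∩ A, pw (d x) = 1/2 := by linarith
        have hAsum : ∑ x ∈ A, μ x = ∑ x ∈ supp ∩ A, μ x := by
          apply Eq.symm
          apply Finset.sum_subset Finset.inter_subset_right
          intro x hxA hxn
          by_contra hne
          exact hxn (Finset.mem_inter.mpr ⟨by simp [hsupp, hne], hxA⟩)
        rw [hAsum, Finset.sum_congr rfl (fun x hx => hd x (Finset.mem_inter.mp hx).1), heqhalf]
  · -- dyadic hitter → optimal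
    intro hhit μ hdist
    classical
    set supp := Finset.univ.filter (fun x => μ x ≠ 0) with hsupp
    have hsne : supp.Nonempty := by
      by_contra h
      rw [Finset.not_nonempty_iff_eq_empty] at h
      have hz : ∑ x, μ x = 0 := Finset.sum_eq_zero fun x _ => by
        by_contra hx
        have : x ∈ supp := by simp [hsupp, hx]
        rw [h] at this
        exact Finset.notMem_empty x this
      rw [hdist.2] at hz
      norm_num at hz
    -- the splitter coming from the hitter
    have hsplit : ∀ (S : Finset (Fin n)) (k : Fin n → ℕ), 2 ≤ S.card →
        ∑ x ∈ S, pw (k x) = 1 →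
        ∃ A ∈ (↑Q : Set (Finset (Fin n))), ∑ x ∈ S ∩ A, pw (k x) = 1/2 := by
      intro S k h2 hsum
      set ν : Fin n → ℝ := fun x => if x ∈ S then pw (k x) else 0 with hν
      have hνdist : IsDistribution ν := by
        constructor
        · intro x
          rw [hν]
          dsimp only
          split
          · exact (pw_pos _).le
          · exact le_rfl
        · rw [hν]
          dsimp only
          rw [Finset.sum_ite_mem, Finset.univ_inter]
          exact hsum
      have hνdy : IsDyadic ν := by
        intro x
        rw [hν]
        dsimp only
        split
        · exact Or.inr ⟨(k x : ℤ), (pw_eq_half_zpow (k x)).symm ▸ rfl⟩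
        · exact Or.inl rfl
      have hνnc : NonConstant ν := by
        obtain ⟨a, ha, b, hb, hab⟩ := Finset.one_lt_card.mp (by omega : 1 < S.card)
        refine ⟨a, b, hab, ?_, ?_⟩
        · rw [hν]; dsimp only; rw [if_pos ha]; exact ne_of_gt (pw_pos _)
        · rw [hν]; dsimp only; rw [if_pos hb]; exact ne_of_gt (pw_pos _)
      obtain ⟨A, hAQ, hAsum⟩ := hhit ν hνdist hνdy hνnc
      refine ⟨A, hAQ, ?_⟩
      rw [← hAsum, hν]
      dsimp only
      rw [Finset.sum_ite_mem, Finset.inter_comm]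
    -- every valid tree can be replaced by a Q-tree of no greater cost
    have hreplace : ∀ T : DTree (Fin n), IsValid T μ →
        ∃ T', IsValid T' μ ∧ UsesQuestions T' ↑Q ∧ cost T' μ ≤ cost T μ := by
      intro T hTv
      have hfind : ∀ x ∈ supp, T.find? x = some (T.depth x) := fun x hx =>
        hTv.finds x (by simpa [hsupp] using hx)
      have hkraft := kraft T supp (fun x => T.depth x) hfind
      obtain ⟨d, hdle, hdsum⟩ := saturate (∑ x ∈ supp, T.depth x) supp
        (fun x => T.depth x) hsne le_rfl hkraft
      obtain ⟨T', hL', hN', hQ', hF'⟩ := build (↑Q) hsplit supp.card supp d 0 le_rfl hsne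
        (by rw [pw_zero]; exact hdsum)
      have hT'v : IsValid T' μ := isValid_of μ T' (hsupp ▸ hL') (hN')
        (fun x hx => (hF' x (hsupp ▸ hx)).imp fun e he => he.1)
      refine ⟨T', hT'v, hQ', ?_⟩
      rw [cost_eq_sum_filter, cost_eq_sum_filter]
      apply Finset.sum_le_sum
      intro x hx
      obtain ⟨e, he, hem⟩ := hF' x (hsupp ▸ hx)
      rw [depth_eq_of_find? he]
      have hc : (e:ℝ) ≤ (T.depth x : ℝ) := by
        exact_mod_cast le_trans (by omega : e ≤ d x) (hdle x (hsupp ▸ hx))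
      exact mul_le_mul_of_nonneg_left hc (hdist.1 x)
    -- a valid tree exists
    obtain ⟨T₀, hT₀l, hT₀f⟩ := chain supp.toList
      (by
        intro h
        have := Finset.toList_toFinset supp
        rw [h] at this
        simp at this
        exact hsne.ne_empty this.symm)
      (Finset.nodup_toList supp)
    have hT₀v : IsValid T₀ μ := isValid_of μ T₀
      (by rw [hT₀l, Finset.toList_toFinset, hsupp])
      (hT₀l ▸ Finset.nodup_toList supp)
      (fun x hx => hT₀f x (Finset.mem_toList.mpr (by rw [hsupp]; exact hx)))
    -- compare the two infima
    have hOSbdd : BddBelow {c | ∃ T : DTree (Fin n), IsValid T μ ∧ c = cost T μ} := by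
      refine ⟨0, ?_⟩
      rintro c ⟨T, hv, rfl⟩
      exact cost_nonneg hdist.1
    have hQSbdd : BddBelow {c | ∃ T : DTree (Fin n), IsValid T μ ∧ UsesQuestions T ↑Q ∧
        c = cost T μ} := by
      refine ⟨0, ?_⟩
      rintro c ⟨T, hv, hq, rfl⟩
      exact cost_nonneg hdist.1
    have hOSne : Set.Nonempty {c | ∃ T : DTree (Fin n), IsValid T μ ∧ c = cost T μ} :=
      ⟨cost T₀ μ, T₀, hT₀v, rfl⟩
    obtain ⟨T₀', h1, h2, h3⟩ := hreplace T₀ hT₀v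
    have hQSne : Set.Nonempty {c | ∃ T : DTree (Fin n), IsValid T μ ∧
        UsesQuestions T ↑Q ∧ c = cost T μ} := ⟨cost T₀' μ, T₀', h1, h2, rfl⟩
    rw [cQ, OptCost]
    apply le_antisymm
    · apply le_csInf hOSne
      rintro c ⟨T, hTv, rfl⟩
      obtain ⟨T', hv', hq', hle'⟩ := hreplace T hTv
      exact le_trans (csInf_le hQSbdd ⟨T', hv', hq', rfl⟩) hle'
    · apply csInf_le_csInf hOSbdd hQSne
      rintro c ⟨T, hv, hq, rfl⟩
      exact ⟨T, hv, rfl⟩
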